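/- Let A be a commutative ring which is an integral domain and an algebra over ℂ, let r ≥ 1 be an integer, and let V be a ℂ-subspace of A of finite dimension g ≥ 1. Then there exists a ℂ-basis w_1, …, w_g of V such that the elements w_1^r, …, w_g^r of A are linearly independent over ℂ. -/
import Mathlib

open Finset Submodule Module

/-- If a polynomial function with coefficients in a ℂ-module vanishes for all `t : ℂ`,
then all coefficients vanish. -/
lemma coeffs_vanish {M : Type*} [AddCommGroup M] [Module ℂ M] (n : ℕ) (a : ℕ → M)
    (h : ∀ t : ℂ, ∑ k ∈ Finset.range n, t ^ k • a k = 0) :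
    ∀ k < n, a k = 0 := by
  intro k hk
  rw [← Module.forall_dual_apply_eq_zero_iff ℂ]
  intro φ
  set p : Polynomial ℂ := ∑ j ∈ Finset.range n, Polynomial.C (φ (a j)) * Polynomial.X ^ j with hp
  have hev : ∀ t : ℂ, p.eval t = 0 := by
    intro t
    have h2 := congrArg φ (h t)
    simp only [map_sum, map_smul, map_zero, smul_eq_mul] at h2
    rw [hp, Polynomial.eval_finset_sum]
    simp only [Polynomial.eval_mul, Polynomial.eval_C, Polynomial.eval_pow, Polynomial.eval_X]
    rw [← h2]
    exact Finset.sum_congr rfl fun j _ => mul_comm _ _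
  have hz : p = 0 := Polynomial.funext fun t => by simp [hev t]
  have hc : p.coeff k = φ (a k) := by
    rw [hp, Polynomial.finset_sum_coeff]
    rw [Finset.sum_eq_single k]
    · simp
    · intro j _ hj
      simp [Polynomial.coeff_X_pow, Ne.symm hj]
    · intro hkk
      exact absurd (Finset.mem_range.2 hk) hkk
  rw [hz] at hc
  simpa using hc.symm

lemma aux_step {A : Type*} [CommRing A] [IsDomain A] [Algebra ℂ A]
    (r : ℕ) (hr : 1 ≤ r)
    (V : Submodule ℂ A) [FiniteDimensional ℂ V] :
    ∀ m, m ≤ Module.finrank ℂ V → ∃ w : Fin m → A, (∀ i, w i ∈ V) ∧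
      LinearIndependent ℂ w ∧ LinearIndependent ℂ (fun i => (w i) ^ r) := by
  intro m
  induction m with
  | zero =>
    intro _
    exact ⟨Fin.elim0, fun i => i.elim0, linearIndependent_empty_type,
      linearIndependent_empty_type⟩
  | succ m ih =>
    intro hm
    obtain ⟨w, hwV, hwli, hwpli⟩ := ih (le_trans (Nat.le_succ m) hm)
    set S : Submodule ℂ A := Submodule.span ℂ (Set.range w) with hS
    set W : Submodule ℂ A := Submodule.span ℂ (Set.range fun i => (w i) ^ r) with hW
    have hSV : S ≤ V := Submodule.span_le.2 (Set.range_subset_iff.2 hwV)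
    have hSrank : Module.finrank ℂ S = m := by
      simpa using finrank_span_eq_card hwli
    have hWrank : Module.finrank ℂ W = m := by
      simpa using finrank_span_eq_card hwpli
    have : FiniteDimensional ℂ W := FiniteDimensional.span_of_finite ℂ (Set.finite_range _)
    -- find v ∈ V \ S
    have hSne : S ≠ V := by
      intro h
      have h2 : Module.finrank ℂ S = Module.finrank ℂ V := by rw [h]
      rw [hSrank] at h2
      omega
    obtain ⟨v, hvV, hvS⟩ := SetLike.exists_of_lt (lt_of_le_of_ne hSV hSne)
    have hv0 : v ≠ 0 := fun h => hvS (h ▸ S.zero_mem)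
    have hvr0 : v ^ (r - 1) ≠ 0 := pow_ne_zero _ hv0
    -- key claim: there is z ∈ V \ S with z^r ∉ W
    have key : ∃ z, z ∈ V ∧ z ∉ S ∧ z ^ r ∉ W := by
      by_contra hcon
      push_neg at hcon
      have hzW : ∀ z, z ∈ V → z ∉ S → z ^ r ∈ W := hcon
      have hvrW : v ^ r ∈ W := hzW v hvV hvS
      have hmix : ∀ i : Fin m, v ^ (r - 1) * w i ∈ W := by
        intro i
        have hpoly : ∀ t : ℂ, ∑ k ∈ Finset.range (r + 1),
            t ^ k • (W.mkQ ((w i) ^ k * v ^ (r - k) * (r.choose k : A))) = 0 := by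
          intro t
          have hmem : (v + t • w i) ^ r ∈ W := by
            refine hzW _ (V.add_mem hvV (V.smul_mem _ (hwV i))) ?_
            intro hin
            apply hvS
            have hwS : t • w i ∈ S :=
              S.smul_mem _ (Submodule.subset_span (Set.mem_range_self i))
            have := S.sub_mem hin hwS
            simpa using this
          have hexp : (v + t • w i) ^ r =
              ∑ k ∈ Finset.range (r + 1),
                t ^ k • ((w i) ^ k * v ^ (r - k) * (r.choose k : A)) := by
            rw [add_comm, add_pow]
            refine Finset.sum_congr rfl fun k _ => ?_
            rw [smul_pow, smul_mul_assoc, smul_mul_assoc]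
          have hzero : W.mkQ ((v + t • w i) ^ r) = 0 := by
            rwa [Submodule.mkQ_apply, Submodule.Quotient.mk_eq_zero]
          rw [hexp, map_sum] at hzero
          simp only [map_smul] at hzero
          exact hzero
        have hall := fun t => hpoly t
        have hcoeff : ∀ k < r + 1,
            W.mkQ ((w i) ^ k * v ^ (r - k) * (r.choose k : A)) = 0 :=
          coeffs_vanish (r + 1) _ hall
        have h1 : (w i) ^ 1 * v ^ (r - 1) * (r.choose 1 : A) ∈ W := by
          have := hcoeff 1 (by omega)
          rwa [Submodule.mkQ_apply, Submodule.Quotient.mk_eq_zero] at this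
        have h1' : (w i) * v ^ (r - 1) * (r : A) ∈ W := by simpa using h1
        have h1'' : (r : ℂ) • (v ^ (r - 1) * w i) ∈ W := by
          have : (r : ℂ) • (v ^ (r - 1) * w i) = (w i) * v ^ (r - 1) * (r : A) := by
            rw [Algebra.smul_def]
            push_cast
            ring
          rwa [this]
        have hrne : (r : ℂ) ≠ 0 := by
          exact_mod_cast Nat.cast_ne_zero.2 (by omega)
        have := W.smul_mem ((r : ℂ))⁻¹ h1''
        rwa [inv_smul_smul₀ hrne] at this
      -- build m+1 independent vectors in W
      set u : Fin (m + 1) → A := fun j => v ^ (r - 1) * (Fin.snoc w v : Fin (m + 1) → A) j with hu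
      have hsnoc : LinearIndependent ℂ (Fin.snoc w v : Fin (m + 1) → A) :=
        linearIndependent_fin_snoc.2 ⟨hwli, hvS⟩
      have huli : LinearIndependent ℂ u := by
        have hker : LinearMap.ker (LinearMap.mulLeft ℂ (v ^ (r - 1))) = ⊥ := by
          rw [LinearMap.ker_eq_bot]
          intro x y hxy
          exact mul_left_cancel₀ hvr0 hxy
        have heq : u = ⇑(LinearMap.mulLeft ℂ (v ^ (r - 1))) ∘ Fin.snoc w v := by
          funext j
          simp [hu]
        exact heq ▸ hsnoc.map' (LinearMap.mulLeft ℂ (v ^ (r - 1))) hker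
      have humem : ∀ j, u j ∈ W := by
        intro j
        induction j using Fin.lastCases with
        | last =>
          have : u (Fin.last m) = v ^ r := by
            simp only [hu, Fin.snoc_last]
            rw [← pow_succ]
            congr 1
            omega
          rw [this]; exact hvrW
        | cast i =>
          have : u (Fin.castSucc i) = v ^ (r - 1) * w i := by
            simp [hu]
          rw [this]; exact hmix i
      have hspan : Submodule.span ℂ (Set.range u) ≤ W :=
        Submodule.span_le.2 (Set.range_subset_iff.2 humem)
      have hrank : Module.finrank ℂ (Submodule.span ℂ (Set.range u)) = m + 1 := by
        simpa using finrank_span_eq_card huli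
      have := Submodule.finrank_mono (t := W) hspan
      rw [hrank, hWrank] at this
      omega
    obtain ⟨z, hzV, hzS, hzW⟩ := key
    refine ⟨Fin.snoc w z, ?_, ?_, ?_⟩
    · intro j
      induction j using Fin.lastCases with
      | last => simpa using hzV
      | cast i => simpa using hwV i
    · exact linearIndependent_fin_snoc.2 ⟨hwli, hzS⟩
    · have heq : (fun j => ((Fin.snoc w z : Fin (m+1) → A) j) ^ r) =
          Fin.snoc (fun i => (w i) ^ r) (z ^ r) := by
        funext j
        induction j using Fin.lastCases with
        | last => simp
        | cast i => simp
      rw [heq]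
      exact linearIndependent_fin_snoc.2 ⟨hwpli, hzW⟩

theorem stmt_15 {A : Type*} [CommRing A] [IsDomain A] [Algebra ℂ A]
    (r : ℕ) (hr : 1 ≤ r)
    (V : Submodule ℂ A) (hfin : FiniteDimensional ℂ V)
    (g : ℕ) (hg : 1 ≤ g) (hdim : Module.finrank ℂ V = g) :
    ∃ w : Fin g → A, (∀ i, w i ∈ V) ∧ LinearIndependent ℂ w ∧
      Submodule.span ℂ (Set.range w) = V ∧
      LinearIndependent ℂ (fun i => (w i) ^ r) := by
  obtain ⟨w, hwV, hwli, hwpli⟩ := aux_step r hr V g (le_of_eq hdim.symm)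
  refine ⟨w, hwV, hwli, ?_, hwpli⟩
  have hle : Submodule.span ℂ (Set.range w) ≤ V :=
    Submodule.span_le.2 (Set.range_subset_iff.2 hwV)
  refine Submodule.eq_of_le_of_finrank_le hle ?_
  rw [hdim]
  simpa using (finrank_span_eq_card hwli).ge
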